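/- arXiv:1510.02295 — 5 statements merged into one kernel-verified Lean document; each statement's English description precedes it below -/
import Mathlib

section
/- Let Γ ⊆ Λ⁺ × ℕ^N be a finitely generated submonoid such that e₁(λ) > 0 whenever (λ, m) ∈ Γ and m ≠ 0 (i.e., Γ has no exceptional characters). Then for every finite subset M ⊆ Γ there exists a ℤ-linear map e: ℤ^D × ℤ^N → ℤ such that: e(λ, m) ≥ 0 for all (λ, m) ∈ Γ; e(λ, m) > 0 for all (λ, m) ∈ Γ with e₁(λ) > 0; and e(λ, m) > e(μ, m') whenever (λ, m), (μ, m') ∈ M satisfy (λ, m) >_alg (μ, m'). -/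
open Finset

/-- Embedding of `ℕ^N` into `ℤ^N`. -/
def natToInt {N : ℕ} (m : Fin N → ℕ) : Fin N → ℤ := fun i => (m i : ℤ)

/-- `m >_lex m'` : there is an index `i` with `m i > m' i` and `m j = m' j` for all `j < i`. -/
def lexGT {N : ℕ} (m m' : Fin N → ℕ) : Prop :=
  ∃ i : Fin N, m' i < m i ∧ ∀ j : Fin N, j < i → m j = m' j

/-- The `Ψ`-weighted lexicographic order: `m > m'` iff `Ψ m > Ψ m'`, or
`Ψ m = Ψ m'` and `m >_lex m'`. -/
def wlexGT {N : ℕ} (Ψ : (Fin N → ℤ) →ₗ[ℤ] ℤ) (m m' : Fin N → ℕ) : Prop :=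
  Ψ (natToInt m') < Ψ (natToInt m) ∨
    (Ψ (natToInt m) = Ψ (natToInt m') ∧ lexGT m m')

/-- `lam ≻_wt mu` : `lam - mu` is a nonzero element of `ℕα₁ + ⋯ + ℕα_s`, where
`Δ = (α₁, …, α_s)` is the family of positive roots. -/
def succWt {D s : ℕ} (Δ : Fin s → (Fin D → ℤ)) (lam mu : Fin D → ℤ) : Prop :=
  lam ≠ mu ∧ ∃ c : Fin s → ℕ, lam - mu = ∑ t, (c t : ℤ) • Δ t

/-- The partial order `>_alg` on `Λ⁺ × ℕ^N`: `(λ, p) >_alg (μ, q)` iff `λ ≻_wt μ`, or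
`λ = μ` and `p < q` in the `Ψ`-weighted lexicographic order. -/
def algGT {D s N : ℕ} (Δ : Fin s → (Fin D → ℤ)) (Ψ : (Fin N → ℤ) →ₗ[ℤ] ℤ)
    (x y : (Fin D → ℤ) × (Fin N → ℕ)) : Prop :=
  succWt Δ x.1 y.1 ∨ (x.1 = y.1 ∧ wlexGT Ψ y.2 x.2)

lemma natToInt_zero {N : ℕ} : natToInt (0 : Fin N → ℕ) = 0 := by
  funext i; simp [natToInt]

lemma natToInt_add {N : ℕ} (m m' : Fin N → ℕ) :
    natToInt (m + m') = natToInt m + natToInt m' := by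
  funext i; simp [natToInt]

lemma lex_sum_lt {N : ℕ} (R : ℕ) (m m' : Fin N → ℕ)
    (hm : ∀ i, m i < R) (hm' : ∀ i, m' i < R) (h : lexGT m m') :
    ∑ j : Fin N, ((N*R+1 : ℕ):ℤ)^(N-1-j.val) * (m' j : ℤ)
      < ∑ j : Fin N, ((N*R+1 : ℕ):ℤ)^(N-1-j.val) * (m j : ℤ) := by
  obtain ⟨i, hi, hprev⟩ := h
  have hR2 : 2 ≤ R := by have h1 := hm i; have h2 := hi; omega
  set W : ℤ := ((N*R+1 : ℕ):ℤ) with hWdef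
  have hW1 : (1:ℤ) ≤ W := by simp [hWdef]; positivity
  rw [← sub_pos, ← Finset.sum_sub_distrib]
  have hd : ∀ j : Fin N, W^(N-1-j.val) * (m j:ℤ) - W^(N-1-j.val)*(m' j:ℤ)
      = W^(N-1-j.val) * ((m j:ℤ) - (m' j :ℤ)) := fun j => by ring
  simp_rw [hd]
  rw [← Finset.sum_filter_add_sum_filter_not Finset.univ (· < i)]
  rw [Finset.sum_eq_zero (fun j hj => by
    rw [hprev j (by simpa using hj)]; ring), zero_add]
  have hfilt : Finset.univ.filter (fun j => ¬ j < i) = Finset.Ici i := by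
    ext j; simp [Finset.mem_Ici, not_lt]
  rw [hfilt, ← Finset.sum_erase_add _ _ (Finset.mem_Ici.mpr le_rfl), Finset.Ici_erase]
  set E : ℕ := N - 1 - i.val with hE
  have hterm : ∀ j ∈ Finset.Ioi i, -(W^(E-1) * ((R:ℤ)-1)) ≤ W^(N-1-j.val) * ((m j:ℤ) - (m' j:ℤ)) := by
    intro j hj
    rw [Finset.mem_Ioi] at hj
    have hje : N-1-j.val ≤ E - 1 := by
      have := j.isLt; have := hj; omega
    have hp : W^(N-1-j.val) ≤ W^(E-1) := pow_le_pow_right₀ hW1 hje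
    have hdiff : -((R:ℤ)-1) ≤ (m j:ℤ) - (m' j:ℤ) := by
      have h1 : (m' j:ℤ) ≤ (R:ℤ) - 1 := by have := hm' j; omega
      have h0 : (0:ℤ) ≤ (m j:ℤ) := Int.natCast_nonneg _
      linarith
    calc -(W^(E-1) * ((R:ℤ)-1)) ≤ -(W^(N-1-j.val) * ((R:ℤ)-1)) := by
          have hRpos : (0:ℤ) ≤ (R:ℤ)-1 := by
            have : (1:ℤ) ≤ R := by exact_mod_cast Nat.one_le_of_lt hR2
            linarith
          nlinarith [pow_nonneg (le_trans zero_le_one hW1) (N-1-j.val)]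
      _ ≤ W^(N-1-j.val) * ((m j:ℤ) - (m' j:ℤ)) := by
          nlinarith [pow_nonneg (le_trans zero_le_one hW1) (N-1-j.val)]
  have hsum : -((E:ℤ) * (W^(E-1) * ((R:ℤ)-1))) ≤ ∑ j ∈ Finset.Ioi i, W^(N-1-j.val) * ((m j:ℤ) - (m' j:ℤ)) := by
    have := Finset.card_nsmul_le_sum (Finset.Ioi i) _ _ hterm
    rw [Fin.card_Ioi] at this
    have hcard : ((N - 1 - i.val : ℕ):ℤ) = (E:ℤ) := by rw [hE]
    simpa [nsmul_eq_mul, hcard, mul_neg, neg_mul] using this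
  have hlast : W^E ≤ W^(N-1-i.val) * ((m i:ℤ) - (m' i:ℤ)) := by
    have hd1 : (1:ℤ) ≤ (m i:ℤ) - (m' i:ℤ) := by
      have := hi; omega
    nlinarith [pow_nonneg (le_trans zero_le_one hW1) E, pow_le_pow_right₀ hW1 (le_refl E)]
  have key : (E:ℤ) * (W^(E-1) * ((R:ℤ)-1)) < W^E := by
    rcases Nat.eq_zero_or_pos E with hE0 | hE1
    · simp only [hE0, Nat.cast_zero, zero_mul, pow_zero]
      exact zero_lt_one
    · have hEsplit : W^E = W * W^(E-1) := by
        rw [← pow_succ']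
        congr 1; omega
      rw [hEsplit]
      have hEN : (E:ℤ) ≤ (N:ℤ) := by exact_mod_cast (by omega : E ≤ N)
      have hWgt : (E:ℤ) * ((R:ℤ)-1) < W := by
        have : ((N:ℕ):ℤ) * ((R:ℤ)-1) < W := by
          rw [hWdef]; push_cast; nlinarith [Int.natCast_nonneg N]
        have hR1 : (0:ℤ) ≤ (R:ℤ) - 1 := by
          have : (1:ℤ) ≤ (R:ℤ) := by exact_mod_cast Nat.one_le_of_lt hR2
          linarith
        nlinarith
      nlinarith [pow_pos (lt_of_lt_of_le zero_lt_one hW1) (E-1)]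
  calc (0:ℤ) < W^E - (E:ℤ) * (W^(E-1) * ((R:ℤ)-1)) := by linarith
    _ ≤ _ := by linarith


set_option maxHeartbeats 1000000 in
/-- Paper's Lemma on the special linear form: let `Λ = ℤ^D`, `Δ` the positive roots,
`Λ⁺ ⊆ Λ` the monoid of dominant weights, `e₁ : Λ → ℤ` linear with `e₁ > 0` on positive
roots and `e₁ ≥ 0` on `Λ⁺`.  Let `Γ ⊆ Λ⁺ × ℕ^N` be a finitely generated submonoid with no
exceptional characters (`(λ,m) ∈ Γ` with `m ≠ 0` implies `e₁ λ > 0`).  Then for every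
finite `M ⊆ Γ` there is a linear form `e : ℤ^D × ℤ^N → ℤ` which is nonnegative on `Γ`,
positive at all `(λ,m) ∈ Γ` with `e₁ λ > 0`, and strictly compatible with `>_alg` on `M`. -/
theorem exists_special_linear_form {D s N : ℕ}
    (Δ : Fin s → (Fin D → ℤ))
    (Λplus : AddSubmonoid (Fin D → ℤ))
    (e1 : (Fin D → ℤ) →ₗ[ℤ] ℤ)
    (he1Δ : ∀ t, 0 < e1 (Δ t))
    (he1Λ : ∀ lam ∈ Λplus, 0 ≤ e1 lam)
    (Ψ : (Fin N → ℤ) →ₗ[ℤ] ℤ)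
    (hΨ : ∀ m : Fin N → ℕ, 0 ≤ Ψ (natToInt m))
    (Γ : AddSubmonoid ((Fin D → ℤ) × (Fin N → ℕ)))
    (hΓΛ : ∀ x ∈ Γ, x.1 ∈ Λplus)
    (hΓfg : Γ.FG)
    (hexc : ∀ x ∈ Γ, x.2 ≠ 0 → 0 < e1 x.1)
    (M : Set ((Fin D → ℤ) × (Fin N → ℕ))) (hMΓ : M ⊆ (Γ : Set _)) (hMfin : M.Finite) :
    ∃ e : ((Fin D → ℤ) × (Fin N → ℤ)) →ₗ[ℤ] ℤ,
      (∀ x ∈ Γ, 0 ≤ e (x.1, natToInt x.2)) ∧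
      (∀ x ∈ Γ, 0 < e1 x.1 → 0 < e (x.1, natToInt x.2)) ∧
      (∀ x ∈ M, ∀ y ∈ M, algGT Δ Ψ x y →
        e (y.1, natToInt y.2) < e (x.1, natToInt x.2)) := by
  classical
  obtain ⟨S, hS⟩ := hΓfg
  set T : Finset ((Fin D → ℤ) × (Fin N → ℕ)) := hMfin.toFinset with hT
  set R : ℕ := 1 + T.sup (fun x => Finset.univ.sup x.2) with hR
  have hcoord : ∀ x ∈ T, ∀ i, x.2 i < R := by
    intro x hx i
    have h1 : x.2 i ≤ Finset.univ.sup x.2 := Finset.le_sup (Finset.mem_univ i)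
    have h2 : Finset.univ.sup x.2 ≤ T.sup (fun x => Finset.univ.sup x.2) :=
      Finset.le_sup (f := fun x => Finset.univ.sup x.2) hx
    omega
  set L : (Fin N → ℤ) →ₗ[ℤ] ℤ :=
    ∑ i : Fin N, (((N*R+1 : ℕ):ℤ) ^ (N-1-i.val)) • (LinearMap.proj i) with hL
  have hLapp : ∀ v : Fin N → ℤ, L v = ∑ j : Fin N, ((N*R+1 : ℕ):ℤ)^(N-1-j.val) * v j := by
    intro v
    simp [hL, LinearMap.sum_apply, LinearMap.smul_apply, LinearMap.proj_apply, smul_eq_mul]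
  have hLnn : ∀ m : Fin N → ℕ, 0 ≤ L (natToInt m) := by
    intro m
    rw [hLapp]
    apply Finset.sum_nonneg
    intro j _
    have : (0:ℤ) ≤ (m j : ℤ) := Int.natCast_nonneg _
    positivity
  have hlexL : ∀ x ∈ T, ∀ y ∈ T, lexGT y.2 x.2 → L (natToInt x.2) < L (natToInt y.2) := by
    intro x hx y hy hlex
    rw [hLapp, hLapp]
    exact lex_sum_lt R y.2 x.2 (hcoord y hy) (hcoord x hx) hlex
  set B : ℤ := 1 + ∑ x ∈ T, L (natToInt x.2) with hB
  have hB1 : 1 ≤ B := by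
    rw [hB]
    have : 0 ≤ ∑ x ∈ T, L (natToInt x.2) := Finset.sum_nonneg (fun x _ => hLnn x.2)
    linarith
  have hBT : ∀ x ∈ T, L (natToInt x.2) < B := by
    intro x hx
    have h1 : L (natToInt x.2) ≤ ∑ x ∈ T, L (natToInt x.2) :=
      Finset.single_le_sum (f := fun x => L (natToInt x.2)) (fun x _ => hLnn x.2) hx
    linarith
  set F : (Fin N → ℤ) →ₗ[ℤ] ℤ := B • Ψ + L with hF
  have hFapp : ∀ v, F v = B * Ψ v + L v := by
    intro v; simp [hF, smul_eq_mul]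
  have hFnn : ∀ m : Fin N → ℕ, 0 ≤ F (natToInt m) := by
    intro m
    rw [hFapp]
    have := hΨ m
    have := hLnn m
    nlinarith
  have hFsep : ∀ x ∈ T, ∀ y ∈ T, wlexGT Ψ y.2 x.2 →
      F (natToInt x.2) < F (natToInt y.2) := by
    intro x hx y hy hw
    rw [hFapp, hFapp]
    rcases hw with hlt | ⟨heq, hlex⟩
    · have h1 : Ψ (natToInt x.2) + 1 ≤ Ψ (natToInt y.2) := hlt
      have h2 := hBT x hx
      have h3 := hLnn y.2
      nlinarith
    · have := hlexL x hx y hy hlex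
      rw [heq]
      linarith
  set K : ℤ := (∑ g ∈ S, F (natToInt g.2)) + ∑ x ∈ T, F (natToInt x.2) with hK
  have hSsum : 0 ≤ ∑ g ∈ S, F (natToInt g.2) := Finset.sum_nonneg (fun g _ => hFnn g.2)
  have hTsum : 0 ≤ ∑ x ∈ T, F (natToInt x.2) := Finset.sum_nonneg (fun x _ => hFnn x.2)
  have hK0 : 0 ≤ K := by rw [hK]; linarith
  have hKS : ∀ g ∈ S, F (natToInt g.2) ≤ K := by
    intro g hg
    have := Finset.single_le_sum (f := fun g => F (natToInt g.2)) (fun g _ => hFnn g.2) hg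
    rw [hK]; linarith
  have hKT : ∀ x ∈ T, F (natToInt x.2) ≤ K := by
    intro x hx
    have := Finset.single_le_sum (f := fun x => F (natToInt x.2)) (fun x _ => hFnn x.2) hx
    rw [hK]; linarith
  set e : ((Fin D → ℤ) × (Fin N → ℤ)) →ₗ[ℤ] ℤ :=
    ((K+1) • e1).comp (LinearMap.fst ℤ (Fin D → ℤ) (Fin N → ℤ)) -
      F.comp (LinearMap.snd ℤ (Fin D → ℤ) (Fin N → ℤ)) with he
  have happ : ∀ lam : Fin D → ℤ, ∀ v : Fin N → ℤ,
      e (lam, v) = (K+1) * e1 lam - F v := by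
    intro lam v
    simp [he, smul_eq_mul]
  have he1nn : ∀ x ∈ Γ, 0 ≤ e1 x.1 := fun x hx => he1Λ x.1 (hΓΛ x hx)
  have hQ : ∀ x ∈ Γ, 0 ≤ K * e1 x.1 - F (natToInt x.2) := by
    intro x hx
    rw [← hS] at hx
    refine AddSubmonoid.closure_induction
      (motive := fun z _ => 0 ≤ K * e1 z.1 - F (natToInt z.2)) ?_ ?_ ?_ hx
    · intro g hg
      have hgΓ : g ∈ Γ := by rw [← hS]; exact AddSubmonoid.subset_closure hg
      by_cases hg2 : g.2 = 0
      · rw [hg2, natToInt_zero, map_zero]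
        have := he1nn g hgΓ
        nlinarith
      · have h1 : 1 ≤ e1 g.1 := hexc g hgΓ hg2
        have h2 := hKS g hg
        nlinarith
    · simp [natToInt_zero]
    · intro a b _ _ ha hb
      have h1 : (a + b).1 = a.1 + b.1 := rfl
      have h2 : (a + b).2 = a.2 + b.2 := rfl
      rw [h1, h2, natToInt_add, map_add, map_add]
      linarith
  refine ⟨e, ?_, ?_, ?_⟩
  · intro x hx
    rw [happ]
    have := hQ x hx
    have := he1nn x hx
    linarith
  · intro x hx hpos
    rw [happ]
    have := hQ x hx
    linarith
  · intro x hx y hy halg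
    have hxT : x ∈ T := by rw [hT]; exact hMfin.mem_toFinset.mpr hx
    have hyT : y ∈ T := by rw [hT]; exact hMfin.mem_toFinset.mpr hy
    rw [happ, happ]
    rcases halg with ⟨hne, c, hc⟩ | ⟨heq, hw⟩
    · have hdiff : e1 x.1 - e1 y.1 = ∑ t, (c t : ℤ) * e1 (Δ t) := by
        rw [← map_sub, hc, map_sum]
        exact Finset.sum_congr rfl fun t _ => by rw [map_smul, smul_eq_mul]
      have hterm : ∀ t ∈ Finset.univ (α := Fin s), 0 ≤ (c t : ℤ) * e1 (Δ t) := by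
        intro t _
        exact mul_nonneg (Int.natCast_nonneg _) (he1Δ t).le
      have hpos : 0 < e1 x.1 - e1 y.1 := by
        rcases (Finset.sum_nonneg hterm).lt_or_eq with h | h
        · rw [hdiff]; exact h
        · exfalso
          apply hne
          have hall := (Finset.sum_eq_zero_iff_of_nonneg hterm).mp h.symm
          have hc0 : ∀ t, c t = 0 := by
            intro t
            have := hall t (Finset.mem_univ t)
            have hΔ := he1Δ t
            have : (c t : ℤ) = 0 := by
              rcases mul_eq_zero.mp this with h' | h'
              · exact h'
              · exfalso; exact hΔ.ne' h'
            exact_mod_cast this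
          have : x.1 - y.1 = 0 := by
            rw [hc]
            apply Finset.sum_eq_zero
            intro t _
            rw [hc0 t]
            simp
          have := sub_eq_zero.mp this
          exact this
      have h1 : e1 y.1 + 1 ≤ e1 x.1 := by linarith [Int.add_one_le_iff.mpr (by linarith : e1 y.1 < e1 x.1)]
      have h2 : F (natToInt x.2) ≤ K := hKT x hxT
      have h3 : 0 ≤ F (natToInt y.2) := hFnn y.2
      nlinarith
    · have := hFsep x hxT y hyT hw
      rw [heq]
      linarith
end

section
/- Let L be a Lie algebra over ℂ and f_1, …, f_N ∈ L satisfying the left bracket condition: for all 1 ≤ i < j ≤ N, either ⁅f_i, f_j⁆ = 0 or there exist k > i and a nonzero a ∈ ℂ with ⁅f_i, f_j⁆ = a • f_k. Let Ψ: ℤ^N → ℤ be an integral weight function such that Ψ(e_i) + Ψ(e_j) = Ψ(e_k) whenever i < j, k > i and ⁅f_i, f_j⁆ = a • f_k with a ≠ 0 (in particular Ψ = 0, giving the plain lexicographic order, is allowed). Let > be the Ψ-weighted lexicographic order on ℕ^N. Then (f_1, …, f_N) together with > is quasi-commutative: every product ι(f_{i_1}) ⋯ ι(f_{i_t}) in U(L)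 lies in f^{exp(i_1,…,i_t)} + span_ℂ{f^n : n ∈ ℕ^N, n < exp(i_1,…,i_t)}. -/
open Finset

noncomputable section

variable {L : Type*} [LieRing L] [LieAlgebra ℂ L]

/-- The ordered monomial `f^m = ι(f₁)^{m₁} ⋯ ι(f_N)^{m_N}` in `U(L)`. -/
def ordMon {N : ℕ} (f : Fin N → L) (m : Fin N → ℕ) : UniversalEnvelopingAlgebra ℂ L :=
  (List.ofFn fun i => (UniversalEnvelopingAlgebra.ι ℂ (f i)) ^ (m i)).prod

/-- The product `ι(f_{i₁}) ⋯ ι(f_{i_t})` in `U(L)` associated to a word `w`. -/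
def wordProd {N : ℕ} (f : Fin N → L) {t : ℕ} (w : Fin t → Fin N) :
    UniversalEnvelopingAlgebra ℂ L :=
  (List.ofFn fun l => UniversalEnvelopingAlgebra.ι ℂ (f (w l))).prod

/-- The exponent of a word: its `k`-th coordinate is the number of occurrences of the
letter `k` in the word. -/
def expOf {N t : ℕ} (w : Fin t → Fin N) : Fin N → ℕ :=
  fun k => (Finset.univ.filter fun l => w l = k).card

/-- `(f₁, …, f_N)` together with the order `r` (where `r m n` means `m > n`) is
quasi-commutative: every product `ι(f_{i₁}) ⋯ ι(f_{i_t})` lies in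
`f^{exp(i₁,…,i_t)} + span ℂ {f^n : n < exp(i₁,…,i_t)}`. -/
def QuasiCommutative {N : ℕ} (f : Fin N → L)
    (r : (Fin N → ℕ) → (Fin N → ℕ) → Prop) : Prop :=
  ∀ (t : ℕ) (w : Fin t → Fin N),
    wordProd f w - ordMon f (expOf w) ∈
      Submodule.span ℂ {x : UniversalEnvelopingAlgebra ℂ L |
        ∃ n : Fin N → ℕ, r (expOf w) n ∧ x = ordMon f n}

/-! ### Auxiliary material for the proof -/

section Aux

variable {N : ℕ}

/-- The canonical (sorted) word associated to an exponent `m`. -/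
def canonWord (m : Fin N → ℕ) : List (Fin N) :=
  (List.finRange N).flatMap fun i => List.replicate (m i) i

theorem count_canonWord (m : Fin N → ℕ) (k : Fin N) : (canonWord m).count k = m k := by
  unfold canonWord
  rw [List.count_flatMap]
  have h : ∀ i : Fin N, ((fun i => List.count k (List.replicate (m i) i)) i)
      = if i = k then m k else 0 := by
    intro i
    simp only []
    rw [List.count_replicate]
    split_ifs with h1 h2 h2 <;> simp_all
  rw [show (List.count k ∘ fun i => List.replicate (m i) i)
      = fun i => if i = k then m k else 0 from funext h]
  rw [← Fin.sum_univ_def]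
  simp

theorem sorted_canonWord (m : Fin N → ℕ) : (canonWord m).Pairwise (· ≤ ·) := by
  unfold canonWord
  rw [List.pairwise_flatMap]
  constructor
  · intro a _; exact List.pairwise_replicate.2 (Or.inr le_rfl)
  · refine (List.pairwise_lt_finRange N).imp ?_
    intro a b hab x hx y hy
    rw [List.eq_of_mem_replicate hx, List.eq_of_mem_replicate hy]
    exact hab.le

/-- Count function of a list. -/
def cnt (w : List (Fin N)) : Fin N → ℕ := fun k => w.count k

theorem sorted_eq_canonWord (w : List (Fin N)) (hs : w.Pairwise (· ≤ ·)) :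
    w = canonWord (cnt w) := by
  refine List.Perm.eq_of_pairwise' hs (sorted_canonWord _) ?_
  rw [List.perm_iff_count]
  intro a
  rw [count_canonWord]
  rfl

/-- Number of inversions of a list. -/
def invs : List (Fin N) → ℕ
  | [] => 0
  | a :: l => l.countP (fun b => decide (b < a)) + invs l

theorem invs_append_perm (u : List (Fin N)) {t1 t2 : List (Fin N)} (h : t1.Perm t2) :
    invs (u ++ t1) + invs t2 = invs (u ++ t2) + invs t1 := by
  induction u with
  | nil => simp [Nat.add_comm]
  | cons c u ih =>
    simp only [List.cons_append, invs, List.append_eq]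
    rw [List.countP_append, List.countP_append, h.countP_eq]
    omega

theorem invs_swap (u v : List (Fin N)) {a b : Fin N} (hab : a < b) :
    invs (u ++ b :: a :: v) = invs (u ++ a :: b :: v) + 1 := by
  have hperm : (b :: a :: v).Perm (a :: b :: v) := List.Perm.swap a b v
  have h := invs_append_perm u hperm
  have h1 : invs (b :: a :: v) = invs (a :: b :: v) + 1 := by
    simp only [invs, List.countP_cons]
    simp [hab, not_lt_of_gt hab]
    omega
  omega

theorem exists_desc (w : List (Fin N)) :
    w.Chain' (· ≤ ·) ∨ ∃ (u : List (Fin N)) (a b : Fin N) (v : List (Fin N)),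
      w = u ++ b :: a :: v ∧ a < b := by
  induction w with
  | nil => exact Or.inl List.isChain_nil
  | cons x l ih =>
    match l, ih with
    | [], _ => exact Or.inl (List.isChain_singleton x)
    | y :: l, ih =>
      by_cases hxy : x ≤ y
      · rcases ih with hc | ⟨u, a, b, v, he, hab⟩
        · exact Or.inl (List.isChain_cons_cons.2 ⟨hxy, hc⟩)
        · exact Or.inr ⟨x :: u, a, b, v, by rw [List.cons_append, ← he], hab⟩
      · exact Or.inr ⟨[], y, x, l, rfl, lt_of_not_ge hxy⟩

theorem lexGT_trans {m n p : Fin N → ℕ} (h1 : lexGT m n) (h2 : lexGT n p) : lexGT m p := by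
  obtain ⟨i1, hi1, hb1⟩ := h1
  obtain ⟨i2, hi2, hb2⟩ := h2
  rcases lt_trichotomy i1 i2 with h | h | h
  · exact ⟨i1, by rw [← hb2 i1 h]; exact hi1, fun j hj => (hb1 j hj).trans (hb2 j (hj.trans h))⟩
  · subst h
    exact ⟨i1, hi2.trans hi1, fun j hj => (hb1 j hj).trans (hb2 j hj)⟩
  · exact ⟨i2, by rw [hb1 i2 h]; exact hi2, fun j hj => (hb1 j (hj.trans h)).trans (hb2 j hj)⟩

theorem wlexGT_trans {Ψ : (Fin N → ℤ) →ₗ[ℤ] ℤ} {m n p : Fin N → ℕ}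
    (h1 : wlexGT Ψ m n) (h2 : wlexGT Ψ n p) : wlexGT Ψ m p := by
  rcases h1 with h1 | ⟨he1, hl1⟩
  · rcases h2 with h2 | ⟨he2, hl2⟩
    · exact Or.inl (h2.trans h1)
    · exact Or.inl (he2 ▸ h1)
  · rcases h2 with h2 | ⟨he2, hl2⟩
    · exact Or.inl (he1 ▸ h2)
    · exact Or.inr ⟨he1.trans he2, lexGT_trans hl1 hl2⟩

theorem lexGT_cnt (u v : List (Fin N)) {a b k : Fin N} (hab : a < b) (hak : a < k) :
    lexGT (cnt (u ++ b :: a :: v)) (cnt (u ++ k :: v)) := by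
  refine ⟨a, ?_, fun j hj => ?_⟩
  · simp [cnt, List.count_cons, hab.ne, hak.ne, hab.ne', hak.ne']
  · have h1 : j ≠ a := hj.ne
    have h2 : j ≠ b := (hj.trans hab).ne
    have h3 : j ≠ k := (hj.trans hak).ne
    simp [cnt, List.count_cons, h1, h2, h3, h1.symm, h2.symm, h3.symm]

theorem natToInt_cnt_eq (u v : List (Fin N)) (a b k : Fin N) :
    natToInt (cnt (u ++ b :: a :: v)) + Pi.single k 1 =
      natToInt (cnt (u ++ k :: v)) + Pi.single a 1 + Pi.single b 1 := by
  funext x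
  simp only [natToInt, cnt, Pi.add_apply, Pi.single_apply, List.count_append,
    List.count_cons, beq_iff_eq]
  push_cast
  split_ifs <;> omega

theorem cnt_swap (u v : List (Fin N)) (a b : Fin N) :
    cnt (u ++ b :: a :: v) = cnt (u ++ a :: b :: v) := by
  funext x
  exact ((List.Perm.append_left u (List.Perm.swap a b v)).count_eq x)

variable {L : Type*} [LieRing L] [LieAlgebra ℂ L]

/-- List version of `wordProd`. -/
def lprod (f : Fin N → L) (w : List (Fin N)) : UniversalEnvelopingAlgebra ℂ L :=
  (w.map fun i => UniversalEnvelopingAlgebra.ι ℂ (f i)).prod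

theorem lprod_append (f : Fin N → L) (u v : List (Fin N)) :
    lprod f (u ++ v) = lprod f u * lprod f v := by
  simp [lprod]

theorem lprod_cons (f : Fin N → L) (i : Fin N) (w : List (Fin N)) :
    lprod f (i :: w) = UniversalEnvelopingAlgebra.ι ℂ (f i) * lprod f w := by
  simp [lprod]

theorem ordMon_eq_lprod (f : Fin N → L) (m : Fin N → ℕ) :
    ordMon f m = lprod f (canonWord m) := by
  unfold ordMon lprod canonWord
  rw [List.map_flatMap, List.ofFn_eq_map]
  rw [List.flatMap, List.prod_flatten, List.map_map]
  congr 1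
  apply List.map_congr_left
  intro i _
  simp [List.prod_replicate]

end Aux


section Key

variable {N : ℕ} {L : Type*} [LieRing L] [LieAlgebra ℂ L]

theorem key_list (f : Fin N → L) (Ψ : (Fin N → ℤ) →ₗ[ℤ] ℤ)
    (hbr : ∀ i j : Fin N, i < j →
      ⁅f i, f j⁆ = 0 ∨ ∃ k : Fin N, i < k ∧ ∃ a : ℂ, a ≠ 0 ∧ ⁅f i, f j⁆ = a • f k)
    (hΨbr : ∀ i j k : Fin N, ∀ a : ℂ, i < j → i < k → a ≠ 0 → ⁅f i, f j⁆ = a • f k →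
      Ψ (Pi.single i 1) + Ψ (Pi.single j 1) = Ψ (Pi.single k 1))
    (w : List (Fin N)) :
    lprod f w - ordMon f (cnt w) ∈
      Submodule.span ℂ {x : UniversalEnvelopingAlgebra ℂ L |
        ∃ n : Fin N → ℕ, wlexGT Ψ (cnt w) n ∧ x = ordMon f n} := by
  rcases exists_desc w with hs | ⟨u, a, b, v, hw, hab⟩
  · have h : ordMon f (cnt w) = lprod f w := by
      rw [ordMon_eq_lprod]
      exact congrArg (lprod f) (sorted_eq_canonWord w (List.isChain_iff_pairwise.mp hs)).symm
    rw [h, sub_self]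
    exact Submodule.zero_mem _
  · rw [hw]
    have hlen : ∀ c : Fin N, (u ++ c :: v).length < (u ++ b :: a :: v).length := by
      intro c; simp
    have hinv : invs (u ++ a :: b :: v) < invs (u ++ b :: a :: v) := by
      rw [invs_swap u v hab]; omega
    have hcomm : (UniversalEnvelopingAlgebra.ι ℂ (f b)) * (UniversalEnvelopingAlgebra.ι ℂ (f a))
        = UniversalEnvelopingAlgebra.ι ℂ (f a) * UniversalEnvelopingAlgebra.ι ℂ (f b)
          + UniversalEnvelopingAlgebra.ι ℂ ⁅f b, f a⁆ := by
      letI : LieRing (UniversalEnvelopingAlgebra ℂ L) := LieRing.ofAssociativeRing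
      rw [LieHom.map_lie, Ring.lie_def]
      abel
    have hcnt : cnt (u ++ b :: a :: v) = cnt (u ++ a :: b :: v) := cnt_swap u v a b
    rcases hbr a b hab with h0 | ⟨k, hak, c, hc, hfk⟩
    · have hprod : lprod f (u ++ b :: a :: v) = lprod f (u ++ a :: b :: v) := by
        simp only [lprod_append, lprod_cons]
        rw [← mul_assoc (UniversalEnvelopingAlgebra.ι ℂ (f b)), hcomm]
        rw [show ⁅f b, f a⁆ = 0 by rw [← lie_skew, h0, neg_zero]]
        rw [map_zero, add_zero, mul_assoc]
      rw [hprod, hcnt]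
      exact key_list f Ψ hbr hΨbr (u ++ a :: b :: v)
    · have hfk2 : ⁅f b, f a⁆ = (-c) • f k := by
        rw [← lie_skew, hfk, neg_smul]
      have hdecomp : lprod f (u ++ b :: a :: v)
          = lprod f (u ++ a :: b :: v) + (-c) • lprod f (u ++ k :: v) := by
        simp only [lprod_append, lprod_cons]
        rw [← mul_assoc (UniversalEnvelopingAlgebra.ι ℂ (f b)), hcomm, hfk2, map_smul]
        rw [add_mul, mul_add, smul_mul_assoc, mul_smul_comm, mul_assoc]
      have hΨeq : Ψ (natToInt (cnt (u ++ b :: a :: v))) = Ψ (natToInt (cnt (u ++ k :: v))) := by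
        have h := congrArg Ψ (natToInt_cnt_eq u v a b k)
        simp only [map_add] at h
        have h2 := hΨbr a b k c hab hak hc hfk
        omega
      have hstep : wlexGT Ψ (cnt (u ++ b :: a :: v)) (cnt (u ++ k :: v)) :=
        Or.inr ⟨hΨeq, lexGT_cnt u v hab hak⟩
      have h1 := key_list f Ψ hbr hΨbr (u ++ a :: b :: v)
      have h2 := key_list f Ψ hbr hΨbr (u ++ k :: v)
      rw [← hcnt] at h1
      have h2' : lprod f (u ++ k :: v) - ordMon f (cnt (u ++ k :: v)) ∈
          Submodule.span ℂ {x : UniversalEnvelopingAlgebra ℂ L |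
            ∃ n : Fin N → ℕ, wlexGT Ψ (cnt (u ++ b :: a :: v)) n ∧ x = ordMon f n} := by
        refine Submodule.span_mono ?_ h2
        rintro x ⟨n, hn, rfl⟩
        exact ⟨n, wlexGT_trans hstep hn, rfl⟩
      have h3 : ordMon f (cnt (u ++ k :: v)) ∈
          Submodule.span ℂ {x : UniversalEnvelopingAlgebra ℂ L |
            ∃ n : Fin N → ℕ, wlexGT Ψ (cnt (u ++ b :: a :: v)) n ∧ x = ordMon f n} :=
        Submodule.subset_span ⟨_, hstep, rfl⟩
      have hrw : lprod f (u ++ b :: a :: v) - ordMon f (cnt (u ++ b :: a :: v))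
          = (lprod f (u ++ a :: b :: v) - ordMon f (cnt (u ++ b :: a :: v)))
            + ((-c) • (lprod f (u ++ k :: v) - ordMon f (cnt (u ++ k :: v)))
              + (-c) • ordMon f (cnt (u ++ k :: v))) := by
        rw [hdecomp]
        module
      rw [hrw]
      exact Submodule.add_mem _ h1
        (Submodule.add_mem _ (Submodule.smul_mem _ _ h2') (Submodule.smul_mem _ _ h3))
termination_by (w.length, invs w)
decreasing_by
  · simp only [hw, Prod.lex_iff, List.length_append, List.length_cons]
    refine Or.inr ⟨trivial, ?_⟩
    rw [invs_swap u v hab]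
    omega
  · simp only [hw, Prod.lex_iff, List.length_append, List.length_cons]
    refine Or.inr ⟨trivial, ?_⟩
    rw [invs_swap u v hab]
    omega
  · simp only [hw, Prod.lex_iff, List.length_append, List.length_cons]
    exact Or.inl (by omega)

end Key


section Fin
variable {N : ℕ}

theorem countP_eq_sum_ite {α : Type*} (p : α → Bool) (l : List α) :
    l.countP p = (l.map fun x => if p x then 1 else 0).sum := by
  induction l with
  | nil => simp
  | cons x l ih =>
    rw [List.countP_cons]
    simp only [List.map_cons, List.sum_cons, ih]
    split_ifs <;> omega

theorem expOf_eq_cnt {t : ℕ} (w : Fin t → Fin N) : expOf w = cnt (List.ofFn w) := by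
  funext k
  unfold expOf cnt
  rw [List.count_eq_countP, List.ofFn_eq_map, List.countP_map,
    countP_eq_sum_ite, ← Fin.sum_univ_def, Finset.card_filter]
  apply Finset.sum_congr rfl
  intro l _
  simp [Function.comp]

variable {L : Type*} [LieRing L] [LieAlgebra ℂ L]

theorem wordProd_eq_lprod (f : Fin N → L) {t : ℕ} (w : Fin t → Fin N) :
    wordProd f w = lprod f (List.ofFn w) := by
  unfold wordProd lprod
  rw [List.map_ofFn]
  rfl

end Fin


/-- If `(f₁, …, f_N)` satisfies the left bracket condition (for `i < j`, either
`⁅fᵢ, fⱼ⁆ = 0` or `⁅fᵢ, fⱼ⁆ = a • f_k` with `a ≠ 0` and `k > i`), and the integral weight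
function `Ψ` satisfies `Ψ(eᵢ) + Ψ(eⱼ) = Ψ(e_k)` for every such bracket relation, then
`(f₁, …, f_N)` is quasi-commutative with respect to the `Ψ`-weighted lexicographic
order. -/
theorem left_bracket_condition_quasiCommutative {N : ℕ} (f : Fin N → L)
    (Ψ : (Fin N → ℤ) →ₗ[ℤ] ℤ)
    (hΨnat : ∀ m : Fin N → ℕ, 0 ≤ Ψ (natToInt m))
    (hbr : ∀ i j : Fin N, i < j →
      ⁅f i, f j⁆ = 0 ∨ ∃ k : Fin N, i < k ∧ ∃ a : ℂ, a ≠ 0 ∧ ⁅f i, f j⁆ = a • f k)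
    (hΨbr : ∀ i j k : Fin N, ∀ a : ℂ, i < j → i < k → a ≠ 0 → ⁅f i, f j⁆ = a • f k →
      Ψ (Pi.single i 1) + Ψ (Pi.single j 1) = Ψ (Pi.single k 1)) :
    QuasiCommutative f (wlexGT Ψ) := by
  intro t w
  rw [wordProd_eq_lprod, expOf_eq_cnt]
  exact key_list f Ψ hbr hΨbr (List.ofFn w)

end
end

section
/- Let L be a Lie algebra over ℂ and f_1, …, f_N ∈ L satisfying the right bracket condition: for all 1 ≤ i < j ≤ N, either ⁅f_i, f_j⁆ = 0 or there exist k < j and a nonzero a ∈ ℂ with ⁅f_i, f_j⁆ = a • f_k. Let Ψ: ℤ^N → ℤ be an integral weight function such that Ψ(e_i) + Ψ(e_j) = Ψ(e_k) whenever i < j, k < j and ⁅f_i, f_j⁆ = a • f_k with a ≠ 0 (in particular Ψ = 0, giving the plain right lexicographic order, is allowed). Let > be the Ψ-weighted right lexicographic order on ℕ^N. Then (f_1, …, f_N) together with > is quasi-commutative: every product ι(f_{i_1}) ⋯ ι(f_{i_t}) in U(L) lies in f^{exp(i_1,…,i_t)} + span_ℂ{f^n : n ∈ ℕ^N, n < exp(i_1,…,i_t)}.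 -/
open Finset

noncomputable section

/-- `m >_rlex m'` : there is an index `i` with `m i > m' i` and `m j = m' j` for all
`j > i`. -/
def rlexGT {N : ℕ} (m m' : Fin N → ℕ) : Prop :=
  ∃ i : Fin N, m' i < m i ∧ ∀ j : Fin N, i < j → m j = m' j

/-- The `Ψ`-weighted right lexicographic order: `m > m'` iff `Ψ m > Ψ m'`, or
`Ψ m = Ψ m'` and `m >_rlex m'`. -/
def wrlexGT {N : ℕ} (Ψ : (Fin N → ℤ) →ₗ[ℤ] ℤ) (m m' : Fin N → ℕ) : Prop :=
  Ψ (natToInt m') < Ψ (natToInt m) ∨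
    (Ψ (natToInt m) = Ψ (natToInt m') ∧ rlexGT m m')

variable {L : Type*} [LieRing L] [LieAlgebra ℂ L]

/-- word product for lists -/
def wp {N : ℕ} (f : Fin N → L) (w : List (Fin N)) : UniversalEnvelopingAlgebra ℂ L :=
  (w.map fun i => UniversalEnvelopingAlgebra.ι ℂ (f i)).prod

def expL {N : ℕ} (w : List (Fin N)) : Fin N → ℕ := fun k => w.count k

lemma wp_nil {N : ℕ} (f : Fin N → L) : wp f [] = 1 := rfl

lemma wp_cons {N : ℕ} (f : Fin N → L) (a : Fin N) (w : List (Fin N)) :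
    wp f (a :: w) = UniversalEnvelopingAlgebra.ι ℂ (f a) * wp f w := by
  simp [wp]

lemma wp_append {N : ℕ} (f : Fin N → L) (u v : List (Fin N)) :
    wp f (u ++ v) = wp f u * wp f v := by
  simp [wp]

/-- canonical sorted word with given exponent -/
def canon {N : ℕ} (m : Fin N → ℕ) : List (Fin N) :=
  (List.ofFn fun i => List.replicate (m i) i).flatten

lemma canon_sorted {N : ℕ} (m : Fin N → ℕ) : (canon m).Pairwise (· ≤ ·) := by
  rw [canon, List.pairwise_flatten]
  constructor
  · intro l hl
    simp only [List.mem_ofFn] at hl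
    obtain ⟨i, rfl⟩ := hl
    exact List.pairwise_replicate.2 (Or.inr le_rfl)
  · rw [List.pairwise_ofFn]
    intro i j hij x hx y hy
    rw [List.eq_of_mem_replicate hx, List.eq_of_mem_replicate hy]
    exact hij.le

lemma count_canon {N : ℕ} (m : Fin N → ℕ) (k : Fin N) : (canon m).count k = m k := by
  rw [canon, List.count_flatten, List.map_ofFn, List.sum_ofFn]
  simp [Function.comp, List.count_replicate]

lemma wp_canon {N : ℕ} (f : Fin N → L) (m : Fin N → ℕ) :
    wp f (canon m) = ordMon f m := by
  rw [wp, canon, List.map_flatten, List.prod_flatten, List.map_ofFn, List.map_ofFn, ordMon]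
  exact congrArg List.prod (congrArg List.ofFn (funext fun i => by
    simp [Function.comp, List.prod_replicate]))

lemma wp_sorted {N : ℕ} (f : Fin N → L) {w : List (Fin N)} (hw : w.Pairwise (· ≤ ·)) :
    wp f w = ordMon f (expL w) := by
  have : w = canon (expL w) := by
    apply List.Perm.eq_of_pairwise' hw (canon_sorted _)
    rw [List.perm_iff_count]
    intro a
    rw [count_canon]
    rfl
  rw [this, wp_canon]
  congr 1
  funext k
  exact (count_canon _ k).symm


/-- number of inversions -/
def invc {N : ℕ} : List (Fin N) → ℕ
  | [] => 0
  | x :: xs => xs.countP (fun y => decide (y < x)) + invc xs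

lemma invc_append_perm {N : ℕ} (u : List (Fin N)) {s s' : List (Fin N)} (h : s.Perm s') :
    invc (u ++ s) + invc s' = invc (u ++ s') + invc s := by
  induction u with
  | nil => simp [Nat.add_comm]
  | cons x u ih =>
    simp only [List.cons_append, invc, List.append_eq]
    have hc : List.countP (fun y => decide (y < x)) (u ++ s)
        = List.countP (fun y => decide (y < x)) (u ++ s') :=
      ((h.append_left u)).countP_eq _
    omega

lemma invc_swap {N : ℕ} {a b : Fin N} (h : a < b) (u v : List (Fin N)) :
    invc (u ++ a :: b :: v) + 1 = invc (u ++ b :: a :: v) := by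
  have hperm : (a :: b :: v).Perm (b :: a :: v) := List.Perm.swap b a v
  have h1 := invc_append_perm u hperm
  have h2 : invc (b :: a :: v) = invc (a :: b :: v) + 1 := by
    simp only [invc, List.countP_cons]
    have hba : ¬ (b < a) := not_lt.2 h.le
    simp [h, hba]
    omega
  omega

lemma exists_descent {N : ℕ} (w : List (Fin N)) (hw : ¬ w.Pairwise (· ≤ ·)) :
    ∃ (u : List (Fin N)) (a b : Fin N) (v : List (Fin N)), a < b ∧ w = u ++ b :: a :: v := by
  induction w with
  | nil => exact absurd List.Pairwise.nil hw
  | cons x xs ih =>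
    by_cases hxs : xs.Pairwise (· ≤ ·)
    · match xs, hxs with
      | [], _ => exact absurd (List.pairwise_singleton _ x) hw
      | y :: ys, hxs =>
        by_cases hxy : x ≤ y
        · exfalso
          apply hw
          rw [List.pairwise_cons]
          refine ⟨?_, hxs⟩
          intro b hb
          rcases List.mem_cons.1 hb with rfl | hb'
          · exact hxy
          · exact le_trans hxy ((List.pairwise_cons.1 hxs).1 b hb')
        · exact ⟨[], y, x, ys, lt_of_not_ge hxy, rfl⟩
    · obtain ⟨u, a, b, v, hab, rfl⟩ := ih hxs
      exact ⟨x :: u, a, b, v, hab, rfl⟩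

lemma wrlexGT_trans {N : ℕ} (Ψ : (Fin N → ℤ) →ₗ[ℤ] ℤ) {m n p : Fin N → ℕ}
    (h1 : wrlexGT Ψ m n) (h2 : wrlexGT Ψ n p) : wrlexGT Ψ m p := by
  rcases h1 with h1 | ⟨he1, hr1⟩ <;> rcases h2 with h2 | ⟨he2, hr2⟩
  · exact Or.inl (h2.trans h1)
  · exact Or.inl (he2 ▸ h1)
  · exact Or.inl (he1 ▸ h2)
  · refine Or.inr ⟨he1.trans he2, ?_⟩
    obtain ⟨i1, hi1, hj1⟩ := hr1
    obtain ⟨i2, hi2, hj2⟩ := hr2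
    rcases lt_trichotomy i1 i2 with h | h | h
    · exact ⟨i2, (hj1 i2 h) ▸ hi2, fun j hj => (hj1 j (h.trans hj)).trans (hj2 j hj)⟩
    · subst h
      exact ⟨i1, hi2.trans hi1, fun j hj => (hj1 j hj).trans (hj2 j hj)⟩
    · exact ⟨i1, (hj2 i1 h) ▸ hi1, fun j hj => (hj1 j hj).trans (hj2 j (h.trans hj))⟩

lemma expL_coord {N : ℕ} (u v : List (Fin N)) (b a j : Fin N) :
    expL (u ++ b :: a :: v) j
      = u.count j + v.count j + (if b = j then 1 else 0) + (if a = j then 1 else 0) := by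
  simp only [expL, List.count_append, List.count_cons, beq_iff_eq]
  split_ifs <;> omega

lemma expL_coord1 {N : ℕ} (u v : List (Fin N)) (k j : Fin N) :
    expL (u ++ k :: v) j = u.count j + v.count j + (if k = j then 1 else 0) := by
  simp only [expL, List.count_append, List.count_cons, beq_iff_eq]
  split_ifs <;> omega

lemma bracket_step_order {N : ℕ} (Ψ : (Fin N → ℤ) →ₗ[ℤ] ℤ) {a b k : Fin N}
    (hab : a < b) (hk : k < b)
    (hΨ : Ψ (Pi.single a 1) + Ψ (Pi.single b 1) = Ψ (Pi.single k 1))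
    (u v : List (Fin N)) :
    wrlexGT Ψ (expL (u ++ b :: a :: v)) (expL (u ++ k :: v)) := by
  have hsingle : natToInt (expL (u ++ k :: v)) = natToInt (expL (u ++ b :: a :: v))
      + (Pi.single k 1 - Pi.single a 1 - Pi.single b (1 : ℤ)) := by
    funext j
    simp only [natToInt, Pi.add_apply, Pi.sub_apply, Pi.single_apply]
    rw [expL_coord u v b a j, expL_coord1 u v k j]
    split_ifs <;> push_cast <;> omega
  have hΨeq : Ψ (natToInt (expL (u ++ b :: a :: v))) = Ψ (natToInt (expL (u ++ k :: v))) := by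
    rw [hsingle, map_add, map_sub, map_sub]
    omega
  refine Or.inr ⟨hΨeq, b, ?_, ?_⟩
  · rw [expL_coord u v b a b, expL_coord1 u v k b, if_pos rfl, if_neg (ne_of_lt hab),
      if_neg (ne_of_lt hk)]
    omega
  · intro j hj
    rw [expL_coord u v b a j, expL_coord1 u v k j, if_neg (ne_of_lt hj),
      if_neg (ne_of_lt (hab.trans hj)), if_neg (ne_of_lt (hk.trans hj))]

attribute [local instance 100] LieRing.ofAssociativeRing

lemma key {N : ℕ} (f : Fin N → L) (Ψ : (Fin N → ℤ) →ₗ[ℤ] ℤ)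
    (hbr : ∀ i j : Fin N, i < j →
      ⁅f i, f j⁆ = 0 ∨ ∃ k : Fin N, k < j ∧ ∃ a : ℂ, a ≠ 0 ∧ ⁅f i, f j⁆ = a • f k)
    (hΨbr : ∀ i j k : Fin N, ∀ a : ℂ, i < j → k < j → a ≠ 0 → ⁅f i, f j⁆ = a • f k →
      Ψ (Pi.single i 1) + Ψ (Pi.single j 1) = Ψ (Pi.single k 1)) :
    ∀ t : ℕ, ∀ w : List (Fin N), w.length ≤ t →
      wp f w - ordMon f (expL w) ∈
        Submodule.span ℂ {x : UniversalEnvelopingAlgebra ℂ L |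
          ∃ n : Fin N → ℕ, wrlexGT Ψ (expL w) n ∧ x = ordMon f n} := by
  intro t
  induction t with
  | zero =>
    intro w hw
    have hnil : w = [] := List.eq_nil_of_length_eq_zero (Nat.le_zero.1 hw)
    subst hnil
    rw [wp_sorted f List.Pairwise.nil, sub_self]
    exact zero_mem _
  | succ t IH =>
    suffices H : ∀ (v : ℕ) (w : List (Fin N)), w.length ≤ t + 1 → invc w ≤ v →
        wp f w - ordMon f (expL w) ∈
          Submodule.span ℂ {x : UniversalEnvelopingAlgebra ℂ L |
            ∃ n : Fin N → ℕ, wrlexGT Ψ (expL w) n ∧ x = ordMon f n} by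
      intro w hw
      exact H (invc w) w hw le_rfl
    intro v
    induction v with
    | zero =>
      intro w hw hv
      by_cases hs : w.Pairwise (· ≤ ·)
      · rw [wp_sorted f hs, sub_self]; exact zero_mem _
      · obtain ⟨u, a, b, vv, hab, rfl⟩ := exists_descent w hs
        have := invc_swap hab u vv
        omega
    | succ v IHv =>
      intro w hw hv
      by_cases hs : w.Pairwise (· ≤ ·)
      · rw [wp_sorted f hs, sub_self]; exact zero_mem _
      · obtain ⟨u, a, b, vv, hab, rfl⟩ := exists_descent w hs
        have hlie : UniversalEnvelopingAlgebra.ι ℂ (f b) * UniversalEnvelopingAlgebra.ι ℂ (f a)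
            = UniversalEnvelopingAlgebra.ι ℂ (f a) * UniversalEnvelopingAlgebra.ι ℂ (f b)
              + UniversalEnvelopingAlgebra.ι ℂ ⁅f b, f a⁆ := by
          rw [LieHom.map_lie, Ring.lie_def]; abel
        have hswap : wp f (u ++ b :: a :: vv) =
            wp f (u ++ a :: b :: vv)
              + wp f u * (UniversalEnvelopingAlgebra.ι ℂ ⁅f b, f a⁆ * wp f vv) := by
          rw [wp_append, wp_append, wp_cons, wp_cons, wp_cons, wp_cons,
            ← mul_assoc (UniversalEnvelopingAlgebra.ι ℂ (f b)), hlie, add_mul, mul_add,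
            mul_assoc]
        have hexp_swap : expL (u ++ a :: b :: vv) = expL (u ++ b :: a :: vv) := by
          funext j
          exact ((List.Perm.swap b a vv).append_left u).count_eq j
        have hlen1 : (u ++ a :: b :: vv).length ≤ t + 1 := by
          simp only [List.length_append, List.length_cons] at hw ⊢
          omega
        have hinv1 : invc (u ++ a :: b :: vv) ≤ v := by
          have := invc_swap hab u vv
          omega
        have mem1 := IHv (u ++ a :: b :: vv) hlen1 hinv1
        rw [hexp_swap] at mem1
        rcases hbr a b hab with h0 | ⟨k, hk, s, hs0, hsk⟩
        · have hz : (⁅f b, f a⁆ : L) = 0 := by rw [← lie_skew, h0, neg_zero]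
          rw [hz, map_zero, zero_mul, mul_zero, add_zero] at hswap
          rw [hswap]
          exact mem1
        · have hbk : (⁅f b, f a⁆ : L) = (-s) • f k := by rw [← lie_skew, hsk, neg_smul]
          have hw2 : wp f (u ++ b :: a :: vv)
              = wp f (u ++ a :: b :: vv) + (-s) • wp f (u ++ k :: vv) := by
            have hwk : wp f (u ++ k :: vv)
                = wp f u * (UniversalEnvelopingAlgebra.ι ℂ (f k) * wp f vv) := by
              rw [wp_append, wp_cons]
            rw [hswap, hbk, map_smul, smul_mul_assoc, mul_smul_comm, hwk]
          have hlen2 : (u ++ k :: vv).length ≤ t := by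
            simp only [List.length_append, List.length_cons] at hw ⊢
            omega
          have mem2 := IH (u ++ k :: vv) hlen2
          have horder : wrlexGT Ψ (expL (u ++ b :: a :: vv)) (expL (u ++ k :: vv)) :=
            bracket_step_order Ψ hab hk (hΨbr a b k s hab hk hs0 hsk) u vv
          have expand : wp f (u ++ b :: a :: vv) - ordMon f (expL (u ++ b :: a :: vv))
              = (wp f (u ++ a :: b :: vv) - ordMon f (expL (u ++ b :: a :: vv)))
                + (-s) • ((wp f (u ++ k :: vv) - ordMon f (expL (u ++ k :: vv)))
                  + ordMon f (expL (u ++ k :: vv))) := by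
            rw [hw2]
            module
          rw [expand]
          refine add_mem mem1 (Submodule.smul_mem _ _ (add_mem ?_ ?_))
          · refine Submodule.span_mono ?_ mem2
            rintro x ⟨m, hm, rfl⟩
            exact ⟨m, wrlexGT_trans Ψ horder hm, rfl⟩
          · exact Submodule.subset_span ⟨_, horder, rfl⟩

lemma count_ofFn {N : ℕ} : ∀ {t : ℕ} (w : Fin t → Fin N) (k : Fin N),
    (List.ofFn w).count k = (Finset.univ.filter fun l => w l = k).card := by
  intro t
  induction t with
  | zero => intro w k; simp
  | succ t ih =>
    intro w k
    rw [List.ofFn_succ, List.count_cons, ih (fun i => w i.succ) k,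
      Finset.card_filter, Finset.card_filter, Fin.sum_univ_succ]
    simp only [beq_iff_eq]
    split_ifs <;> omega



/-- If `(f₁, …, f_N)` satisfies the right bracket condition (for `i < j`, either
`⁅fᵢ, fⱼ⁆ = 0` or `⁅fᵢ, fⱼ⁆ = a • f_k` with `a ≠ 0` and `k < j`), and the integral weight
function `Ψ` satisfies `Ψ(eᵢ) + Ψ(eⱼ) = Ψ(e_k)` for every such bracket relation, then
`(f₁, …, f_N)` is quasi-commutative with respect to the `Ψ`-weighted right lexicographic
order. -/
theorem right_bracket_condition_quasiCommutative {N : ℕ} (f : Fin N → L)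
    (Ψ : (Fin N → ℤ) →ₗ[ℤ] ℤ)
    (hΨnat : ∀ m : Fin N → ℕ, 0 ≤ Ψ (natToInt m))
    (hbr : ∀ i j : Fin N, i < j →
      ⁅f i, f j⁆ = 0 ∨ ∃ k : Fin N, k < j ∧ ∃ a : ℂ, a ≠ 0 ∧ ⁅f i, f j⁆ = a • f k)
    (hΨbr : ∀ i j k : Fin N, ∀ a : ℂ, i < j → k < j → a ≠ 0 → ⁅f i, f j⁆ = a • f k →
      Ψ (Pi.single i 1) + Ψ (Pi.single j 1) = Ψ (Pi.single k 1)) :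
    QuasiCommutative f (wrlexGT Ψ) := by
  intro t w
  have h1 : wordProd f w = wp f (List.ofFn w) := by
    rw [wordProd, wp, List.map_ofFn]
    rfl
  have h2 : expOf w = expL (List.ofFn w) := by
    funext k
    exact (count_ofFn w k).symm
  rw [h1, h2]
  exact key f Ψ hbr hΨbr (List.ofFn w).length _ le_rfl

end
end

section
/- Let L be a Lie algebra over ℂ, let f_1, …, f_N ∈ L, and let Ψ: ℤ^N → ℤ be an integral weight function such that for all 1 ≤ i < j ≤ N the bracket ⁅f_i, f_j⁆ lies in span_ℂ{f_k : Ψ(e_k) < Ψ(e_i) + Ψ(e_j)}. Let > be the Ψ-weighted lexicographic order on ℕ^N. Then (f_1, …, f_N) together with > is quasi-commutative: every product ι(f_{i_1}) ⋯ ι(f_{i_t}) in U(L) lies in f^{exp(i_1,…,i_t)} + span_ℂ{f^n : n ∈ ℕ^N, n < exp(i_1,…,i_t)}. -/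
open Finset

noncomputable section

variable {L : Type*} [LieRing L] [LieAlgebra ℂ L]

namespace QCaux

/-- The product of `ι (f i)` over a list of letters. -/
def lp {N : ℕ} (f : Fin N → L) (w : List (Fin N)) : UniversalEnvelopingAlgebra ℂ L :=
  (w.map (fun i => UniversalEnvelopingAlgebra.ι ℂ (f i))).prod

/-- Exponent of a list word. -/
def expL {N : ℕ} (w : List (Fin N)) : Fin N → ℕ := fun k => w.count k

/-- Inversion count. -/
def inv {N : ℕ} : List (Fin N) → ℕ
  | [] => 0
  | a :: l => l.countP (fun b => decide (b < a)) + inv l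

variable {N : ℕ} (f : Fin N → L)

lemma lp_nil : lp f ([] : List (Fin N)) = 1 := rfl

lemma lp_cons (i : Fin N) (w : List (Fin N)) :
    lp f (i :: w) = UniversalEnvelopingAlgebra.ι ℂ (f i) * lp f w := by
  simp [lp]

lemma lp_append (u v : List (Fin N)) : lp f (u ++ v) = lp f u * lp f v := by
  simp [lp]

lemma expL_append (u v : List (Fin N)) : expL (u ++ v) = expL u + expL v := by
  funext k; simp [expL, List.count_append]

lemma natToInt_add (m n : Fin N → ℕ) : natToInt (m + n) = natToInt m + natToInt n := by
  funext k; simp only [natToInt, Pi.add_apply, Nat.cast_add]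

lemma expL_single (i : Fin N) : natToInt (expL [i]) = Pi.single i 1 := by
  funext k
  simp only [natToInt, expL, List.count_cons, List.count_nil]
  rw [Pi.single_apply]
  by_cases h : i = k
  · subst h; simp
  · simp [h, Ne.symm h]

variable (Ψ : (Fin N → ℤ) →ₗ[ℤ] ℤ)

lemma wt_append (u v : List (Fin N)) :
    Ψ (natToInt (expL (u ++ v))) = Ψ (natToInt (expL u)) + Ψ (natToInt (expL v)) := by
  rw [expL_append, natToInt_add, map_add]

lemma wt_cons (i : Fin N) (v : List (Fin N)) :
    Ψ (natToInt (expL (i :: v))) = Ψ (Pi.single i 1) + Ψ (natToInt (expL v)) := by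
  have : (i :: v) = [i] ++ v := rfl
  rw [this, wt_append, expL_single]


/-- Canonical sorted word with exponent `m`. -/
def canon (m : Fin N → ℕ) : List (Fin N) :=
  (List.finRange N).flatMap fun i => List.replicate (m i) i

lemma lp_flatMap (l : List (Fin N)) (c : Fin N → List (Fin N)) :
    lp f (l.flatMap c) = (l.map fun a => lp f (c a)).prod := by
  induction l with
  | nil => simp [lp]
  | cons a l ih => simp [List.flatMap_cons, lp_append, ih]

lemma lp_replicate (n : ℕ) (i : Fin N) :
    lp f (List.replicate n i) = (UniversalEnvelopingAlgebra.ι ℂ (f i)) ^ n := by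
  simp [lp, List.map_replicate, List.prod_replicate]

lemma ordMon_eq_lp_canon (m : Fin N → ℕ) : ordMon f m = lp f (canon m) := by
  rw [ordMon, canon, lp_flatMap, List.ofFn_eq_map]
  congr 1
  exact List.map_congr_left fun i _ => (lp_replicate f (m i) i).symm

lemma sum_map_ite_zero (k : Fin N) (m : Fin N → ℕ) :
    ∀ l : List (Fin N), k ∉ l → (l.map fun i => if i = k then m i else 0).sum = 0 := by
  intro l
  induction l with
  | nil => intro _; simp
  | cons a l ih =>
    intro h
    have ha : a ≠ k := fun hh => h (hh ▸ List.mem_cons_self (a := a) (l := l))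
    simp only [List.map_cons, List.sum_cons, if_neg ha]
    rw [ih fun hh => h (List.mem_cons_of_mem a hh)]

lemma sum_map_ite (k : Fin N) (m : Fin N → ℕ) :
    ∀ l : List (Fin N), l.Nodup → k ∈ l → (l.map fun i => if i = k then m i else 0).sum = m k := by
  intro l
  induction l with
  | nil => intro _ h; simp at h
  | cons a l ih =>
    intro hnd hk
    obtain ⟨ha, hnd'⟩ := List.nodup_cons.mp hnd
    simp only [List.map_cons, List.sum_cons]
    by_cases h : a = k
    · subst h
      rw [if_pos rfl, sum_map_ite_zero a m l ha, add_zero]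
    · rw [if_neg h]
      have hk' : k ∈ l := by
        rcases List.mem_cons.mp hk with h' | h'
        · exact absurd h'.symm h
        · exact h'
      rw [ih hnd' hk', zero_add]

lemma expL_canon (m : Fin N → ℕ) : expL (canon m) = m := by
  funext k
  show (canon m).count k = m k
  rw [canon, List.count_flatMap]
  have heq : List.map (List.count k ∘ fun i => List.replicate (m i) i) (List.finRange N)
      = (List.finRange N).map (fun i => if i = k then m i else 0) := by
    refine List.map_congr_left fun i _ => ?_
    simp only [Function.comp_apply, List.count_replicate]
    by_cases h : i = k <;> simp [h]
  rw [heq, sum_map_ite k m _ (List.nodup_finRange N) (List.mem_finRange k)]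

lemma canon_sorted (m : Fin N → ℕ) : (canon m).Pairwise (· ≤ ·) := by
  rw [canon]
  have : ∀ l : List (Fin N), l.Pairwise (· ≤ ·) →
      (l.flatMap fun i => List.replicate (m i) i).Pairwise (· ≤ ·) := by
    intro l
    induction l with
    | nil => intro _; simp
    | cons a l ih =>
      intro hl
      obtain ⟨ha, hl'⟩ := List.pairwise_cons.mp hl
      rw [List.flatMap_cons, List.pairwise_append]
      refine ⟨List.pairwise_replicate.mpr (Or.inr le_rfl), ih hl', ?_⟩
      intro x hx y hy
      obtain rfl := List.eq_of_mem_replicate hx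
      obtain ⟨b, hb, hyb⟩ := List.mem_flatMap.mp hy
      obtain rfl := List.eq_of_mem_replicate hyb
      exact ha _ hb
  exact this _ (List.pairwise_le_finRange N)

lemma sorted_eq_canon (w : List (Fin N)) (hw : w.Pairwise (· ≤ ·)) : w = canon (expL w) := by
  refine List.Perm.eq_of_sortedLE hw.sortedLE (canon_sorted _).sortedLE ?_
  rw [List.perm_iff_count]
  intro a
  have h := congrFun (expL_canon (expL w)) a
  exact h.symm

lemma lp_sorted (w : List (Fin N)) (hw : w.Pairwise (· ≤ ·)) :
    lp f w = ordMon f (expL w) := by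
  rw [ordMon_eq_lp_canon]
  exact congrArg (lp f) (sorted_eq_canon w hw)

lemma inv_append (u l : List (Fin N)) :
    inv (u ++ l) = inv u + inv l + (u.map fun x => l.countP (fun b => decide (b < x))).sum := by
  induction u with
  | nil => simp [inv]
  | cons a u ih =>
    have e1 : inv (a :: (u ++ l)) = (u ++ l).countP (fun b => decide (b < a)) + inv (u ++ l) := rfl
    have e2 : inv (a :: u) = u.countP (fun b => decide (b < a)) + inv u := rfl
    rw [List.cons_append, e1, e2, List.countP_append, ih, List.map_cons, List.sum_cons]
    omega

lemma inv_swap (u v : List (Fin N)) {i j : Fin N} (h : j < i) :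
    inv (u ++ j :: i :: v) + 1 = inv (u ++ i :: j :: v) := by
  rw [inv_append, inv_append]
  have hmap : (u.map fun x => (j :: i :: v).countP (fun b => decide (b < x)))
      = u.map fun x => (i :: j :: v).countP (fun b => decide (b < x)) := by
    refine List.map_congr_left fun x _ => ?_
    simp only [List.countP_cons]
    omega
  rw [hmap]
  have h1 : inv (j :: i :: v) + 1 = inv (i :: j :: v) := by
    simp only [inv, List.countP_cons, decide_eq_true_eq, if_pos h, if_neg (h.not_gt)]
    omega
  omega

lemma chain'_or_descent : ∀ w : List (Fin N),
    w.Chain' (· ≤ ·) ∨ ∃ (u : List (Fin N)) (i j : Fin N) (v : List (Fin N)),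
      j < i ∧ w = u ++ i :: j :: v := by
  intro w
  induction w with
  | nil => exact Or.inl List.isChain_nil
  | cons a l ih =>
    cases l with
    | nil => exact Or.inl (List.isChain_singleton a)
    | cons b l2 =>
      rcases lt_or_ge b a with hba | hab
      · exact Or.inr ⟨[], a, b, l2, hba, rfl⟩
      · rcases ih with hc | ⟨u, i, j, v, hji, heq⟩
        · exact Or.inl (List.isChain_cons_cons.mpr ⟨hab, hc⟩)
        · exact Or.inr ⟨a :: u, i, j, v, hji, by rw [heq]; rfl⟩

lemma sorted_or_descent (w : List (Fin N)) :
    w.Pairwise (· ≤ ·) ∨ ∃ (u : List (Fin N)) (i j : Fin N) (v : List (Fin N)),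
      j < i ∧ w = u ++ i :: j :: v := by
  rcases chain'_or_descent w with h | h
  · exact Or.inl (List.isChain_iff_pairwise.mp h)
  · exact Or.inr h

lemma lp_mid (u v : List (Fin N)) (k : Fin N) :
    lp f (u ++ k :: v) = lp f u * UniversalEnvelopingAlgebra.ι ℂ (f k) * lp f v := by
  rw [lp_append, lp_cons, mul_assoc]

lemma lp_swap (u v : List (Fin N)) (i j : Fin N) :
    lp f (u ++ i :: j :: v) = lp f (u ++ j :: i :: v)
      + lp f u * UniversalEnvelopingAlgebra.ι ℂ ⁅f i, f j⁆ * lp f v := by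
  have hι : (UniversalEnvelopingAlgebra.ι ℂ ⁅f i, f j⁆ : UniversalEnvelopingAlgebra ℂ L)
      = UniversalEnvelopingAlgebra.ι ℂ (f i) * UniversalEnvelopingAlgebra.ι ℂ (f j)
        - UniversalEnvelopingAlgebra.ι ℂ (f j) * UniversalEnvelopingAlgebra.ι ℂ (f i) := by
    letI : LieRing (UniversalEnvelopingAlgebra ℂ L) := LieRing.ofAssociativeRing
    letI : LieAlgebra ℂ (UniversalEnvelopingAlgebra ℂ L) := LieAlgebra.ofAssociativeAlgebra
    rw [LieHom.map_lie, Ring.lie_def]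
  rw [lp_append, lp_append, lp_cons, lp_cons, lp_cons, lp_cons, hι]
  noncomm_ring

lemma count_eq_sum (k : Fin N) : ∀ l : List (Fin N),
    l.count k = (l.map fun a => if a = k then 1 else 0).sum := by
  intro l
  induction l with
  | nil => simp
  | cons a l ih =>
    rw [List.count_cons, List.map_cons, List.sum_cons, ih]
    by_cases h : a = k <;> simp [h] <;> omega


lemma hbr_general
    (hbr : ∀ i j : Fin N, i < j →
      ⁅f i, f j⁆ ∈ Submodule.span ℂ {x : L | ∃ k : Fin N,
        Ψ (Pi.single k 1) < Ψ (Pi.single i 1) + Ψ (Pi.single j 1) ∧ x = f k})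
    {i j : Fin N} (h : j < i) :
    ⁅f i, f j⁆ ∈ Submodule.span ℂ {x : L | ∃ k : Fin N,
      Ψ (Pi.single k 1) < Ψ (Pi.single i 1) + Ψ (Pi.single j 1) ∧ x = f k} := by
  have h1 := hbr j i h
  have hsub : {x : L | ∃ k : Fin N,
        Ψ (Pi.single k 1) < Ψ (Pi.single j 1) + Ψ (Pi.single i 1) ∧ x = f k}
      ⊆ {x : L | ∃ k : Fin N,
        Ψ (Pi.single k 1) < Ψ (Pi.single i 1) + Ψ (Pi.single j 1) ∧ x = f k} := by
    rintro x ⟨k, hk, hx⟩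
    exact ⟨k, by linarith, hx⟩
  have h2 := Submodule.span_mono (R := ℂ) hsub h1
  rw [← lie_skew]
  exact neg_mem h2

lemma key (hΨnat : ∀ m : Fin N → ℕ, 0 ≤ Ψ (natToInt m))
    (hbr : ∀ i j : Fin N, i < j →
      ⁅f i, f j⁆ ∈ Submodule.span ℂ {x : L | ∃ k : Fin N,
        Ψ (Pi.single k 1) < Ψ (Pi.single i 1) + Ψ (Pi.single j 1) ∧ x = f k}) :
    ∀ (W I : ℕ) (w : List (Fin N)), (Ψ (natToInt (expL w))).toNat < W → inv w < I →
      lp f w - ordMon f (expL w) ∈ Submodule.span ℂ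
        {x : UniversalEnvelopingAlgebra ℂ L |
          ∃ n : Fin N → ℕ, wlexGT Ψ (expL w) n ∧ x = ordMon f n} := by
  intro W
  induction W with
  | zero => exact fun I w h _ => absurd h (Nat.not_lt_zero _)
  | succ W ihW =>
    intro I
    induction I with
    | zero => exact fun w _ h => absurd h (Nat.not_lt_zero _)
    | succ I ihI =>
      intro w hW hI
      rcases sorted_or_descent w with hs | ⟨u, i, j, v, hji, rfl⟩
      · rw [lp_sorted f w hs, sub_self]
        exact Submodule.zero_mem _
      · have hexp : expL (u ++ j :: i :: v) = expL (u ++ i :: j :: v) := by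
          funext k
          show (u ++ j :: i :: v).count k = (u ++ i :: j :: v).count k
          rw [List.count_append, List.count_append, List.count_cons, List.count_cons,
            List.count_cons, List.count_cons]
          ring
        -- the swapped word
        have hswap := inv_swap u v hji
        have h1 := ihI (u ++ j :: i :: v) (by rw [hexp]; exact hW) (by omega)
        rw [hexp] at h1
        -- the bracket term
        have hb := hbr_general f Ψ hbr hji
        have h2 : lp f u * UniversalEnvelopingAlgebra.ι ℂ ⁅f i, f j⁆ * lp f v ∈
            Submodule.span ℂ {x : UniversalEnvelopingAlgebra ℂ L |
              ∃ n : Fin N → ℕ, wlexGT Ψ (expL (u ++ i :: j :: v)) n ∧ x = ordMon f n} := by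
          refine Submodule.span_induction
            (p := fun y _ => lp f u * UniversalEnvelopingAlgebra.ι ℂ y * lp f v ∈
              Submodule.span ℂ {x : UniversalEnvelopingAlgebra ℂ L |
                ∃ n : Fin N → ℕ, wlexGT Ψ (expL (u ++ i :: j :: v)) n ∧ x = ordMon f n})
            ?_ ?_ ?_ ?_ hb
          · rintro x ⟨k, hk, rfl⟩
            rw [← lp_mid]
            have hwkv : Ψ (natToInt (expL (u ++ k :: v))) <
                Ψ (natToInt (expL (u ++ i :: j :: v))) := by
              rw [wt_append, wt_append, wt_cons, wt_cons, wt_cons]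
              linarith
            have hge := hΨnat (expL (u ++ k :: v))
            have hge2 := hΨnat (expL (u ++ i :: j :: v))
            have h3 := ihW (inv (u ++ k :: v) + 1) (u ++ k :: v) (by omega) (by omega)
            have hsub : Submodule.span ℂ {x : UniversalEnvelopingAlgebra ℂ L |
                  ∃ n : Fin N → ℕ, wlexGT Ψ (expL (u ++ k :: v)) n ∧ x = ordMon f n} ≤
                Submodule.span ℂ {x : UniversalEnvelopingAlgebra ℂ L |
                  ∃ n : Fin N → ℕ, wlexGT Ψ (expL (u ++ i :: j :: v)) n ∧ x = ordMon f n} := by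
              apply Submodule.span_le.mpr
              rintro x ⟨n, hn, rfl⟩
              apply Submodule.subset_span
              refine ⟨n, Or.inl ?_, rfl⟩
              rcases hn with h' | ⟨h', _⟩
              · linarith
              · rw [← h']; exact hwkv
            have hmem : ordMon f (expL (u ++ k :: v)) ∈
                Submodule.span ℂ {x : UniversalEnvelopingAlgebra ℂ L |
                  ∃ n : Fin N → ℕ, wlexGT Ψ (expL (u ++ i :: j :: v)) n ∧ x = ordMon f n} :=
              Submodule.subset_span ⟨expL (u ++ k :: v), Or.inl hwkv, rfl⟩
            have h4 := Submodule.add_mem _ (hsub h3) hmem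
            simpa using h4
          · simp only [map_zero, mul_zero, zero_mul]
            exact Submodule.zero_mem _
          · intro x y _ _ hx hy
            simp only [map_add, mul_add, add_mul]
            exact Submodule.add_mem _ hx hy
          · intro c x _ hx
            simp only [map_smul, mul_smul_comm, smul_mul_assoc]
            exact Submodule.smul_mem _ _ hx
        rw [lp_swap]
        have hre : lp f (u ++ j :: i :: v)
              + lp f u * UniversalEnvelopingAlgebra.ι ℂ ⁅f i, f j⁆ * lp f v
              - ordMon f (expL (u ++ i :: j :: v))
            = (lp f (u ++ j :: i :: v) - ordMon f (expL (u ++ i :: j :: v)))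
              + lp f u * UniversalEnvelopingAlgebra.ι ℂ ⁅f i, f j⁆ * lp f v := by
          abel
        rw [hre]
        exact Submodule.add_mem _ h1 h2

end QCaux

/-- If for all `i < j` the bracket `⁅fᵢ, fⱼ⁆` lies in the span of those `f_k` with
`Ψ(e_k) < Ψ(eᵢ) + Ψ(eⱼ)`, then `(f₁, …, f_N)` is quasi-commutative with respect to the
`Ψ`-weighted lexicographic order. -/


theorem bracket_lower_weight_quasiCommutative {N : ℕ} (f : Fin N → L)
    (Ψ : (Fin N → ℤ) →ₗ[ℤ] ℤ)
    (hΨnat : ∀ m : Fin N → ℕ, 0 ≤ Ψ (natToInt m))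
    (hbr : ∀ i j : Fin N, i < j →
      ⁅f i, f j⁆ ∈ Submodule.span ℂ {x : L | ∃ k : Fin N,
        Ψ (Pi.single k 1) < Ψ (Pi.single i 1) + Ψ (Pi.single j 1) ∧ x = f k}) :
    QuasiCommutative f (wlexGT Ψ) := by
  intro t w
  have h1 : wordProd f w = QCaux.lp f (List.ofFn w) := by
    rw [wordProd, QCaux.lp, List.map_ofFn]
    rfl
  have h2 : expOf w = QCaux.expL (List.ofFn w) := by
    funext k
    show (Finset.univ.filter fun l => w l = k).card = (List.ofFn w).count k
    rw [QCaux.count_eq_sum, List.map_ofFn, Finset.card_filter]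
    have := List.sum_ofFn (f := fun l => if w l = k then 1 else 0) (n := t)
    rw [show ((fun a => if a = k then 1 else 0) ∘ w) = fun l => if w l = k then 1 else 0 from rfl,
      this]
  rw [h1, h2]
  exact QCaux.key f Ψ hΨnat hbr _ _ (List.ofFn w) (Nat.lt_succ_self _) (Nat.lt_succ_self _)


end
end

section
/- Let L be a Lie algebra over ℂ, f_1, …, f_N ∈ L, and > a linear order on ℕ^N such that (f_1, …, f_N) together with > is quasi-commutative. Then for all a, b ∈ ℕ^N the product of divided-power ordered monomials satisfies: f^{(a)} · f^{(b)} − (∏_{i=1}^N C(a_i + b_i, a_i)) · f^{(a+b)} ∈ span_ℂ{f^{(n)} : n ∈ ℕ^N, n < a + b}, where C(·,·) denotes the binomial coefficient. -/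
open Finset

noncomputable section

variable {L : Type*} [LieRing L] [LieAlgebra ℂ L]

/-- The ordered monomial in divided powers `f^{(m)} = (1/(m₁! ⋯ m_N!)) f^m` in `U(L)`. -/
def divMon {N : ℕ} (f : Fin N → L) (m : Fin N → ℕ) : UniversalEnvelopingAlgebra ℂ L :=
  ((∏ i, ((m i).factorial : ℂ)))⁻¹ • ordMon f m

theorem expOf_aux {N : ℕ} : ∀ {t : ℕ} (w : Fin t → Fin N) (k : Fin N),
    (Finset.univ.filter fun l => w l = k).card = (List.ofFn w).count k := by
  intro t
  induction t with
  | zero => intro w k; simp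
  | succ t ih =>
    intro w k
    rw [Finset.card_filter, Fin.sum_univ_succ, List.ofFn_succ, List.count_cons,
      ← Finset.card_filter, ih (fun i => w i.succ) k]
    by_cases h : w 0 = k
    · simp only [h, if_true, beq_self_eq_true]; omega
    · simp only [h, if_false]; rw [beq_eq_false_iff_ne.2 h]; simp

theorem expOf_get {N : ℕ} (w : List (Fin N)) (k : Fin N) :
    expOf w.get k = w.count k := by
  rw [expOf, expOf_aux, List.ofFn_get]

theorem wordProd_get {N : ℕ} (f : Fin N → L) (w : List (Fin N)) :
    wordProd f w.get = (w.map fun i => UniversalEnvelopingAlgebra.ι ℂ (f i)).prod := by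
  rw [wordProd,
    show (fun l => UniversalEnvelopingAlgebra.ι ℂ (f (w.get l)))
      = (fun i => UniversalEnvelopingAlgebra.ι ℂ (f i)) ∘ w.get from rfl,
    ← List.map_ofFn, List.ofFn_get]

def repList {N : ℕ} (m : Fin N → ℕ) : List (Fin N) :=
  (List.finRange N).flatMap fun i => List.replicate (m i) i

theorem repList_count {N : ℕ} (m : Fin N → ℕ) (k : Fin N) :
    (repList m).count k = m k := by
  rw [repList, List.count_flatMap]
  simp only [Function.comp_def, List.count_replicate]
  rw [← List.ofFn_eq_map, List.sum_ofFn]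
  simp

theorem repList_prod {N : ℕ} (f : Fin N → L) (m : Fin N → ℕ) :
    ((repList m).map fun i => UniversalEnvelopingAlgebra.ι ℂ (f i)).prod = ordMon f m := by
  rw [repList, ordMon, List.ofFn_eq_map]
  simp [List.flatMap, List.prod_flatten, List.map_map, Function.comp_def,
    List.map_replicate, List.prod_replicate]


/-- If `(f₁, …, f_N)` is quasi-commutative with respect to a linear order `r` on `ℕ^N`
(`r m n` meaning `m > n`), then for all `a, b ∈ ℕ^N` the product of divided-power ordered
monomials satisfies
`f^{(a)} · f^{(b)} − (∏ᵢ C(aᵢ + bᵢ, aᵢ)) · f^{(a+b)} ∈ span ℂ {f^{(n)} : n < a + b}`. -/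
theorem divMon_mul_divMon {N : ℕ} {L : Type*} [LieRing L] [LieAlgebra ℂ L]
    (f : Fin N → L) (r : (Fin N → ℕ) → (Fin N → ℕ) → Prop)
    (hirr : ∀ m, ¬ r m m)
    (htrans : ∀ a b c, r a b → r b c → r a c)
    (htot : ∀ a b, a = b ∨ r a b ∨ r b a)
    (hqc : QuasiCommutative f r)
    (a b : Fin N → ℕ) :
    divMon f a * divMon f b -
        (∏ i, (((a i + b i).choose (a i) : ℕ) : ℂ)) • divMon f (a + b) ∈
      Submodule.span ℂ {x : UniversalEnvelopingAlgebra ℂ L |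
        ∃ n : Fin N → ℕ, r (a + b) n ∧ x = divMon f n} := by
  set wl : List (Fin N) := repList a ++ repList b with hwl
  have hexp : expOf wl.get = a + b := by
    funext k
    rw [expOf_get, hwl, List.count_append, repList_count, repList_count]; rfl
  have hword : wordProd f wl.get = ordMon f a * ordMon f b := by
    rw [wordProd_get, hwl, List.map_append, List.prod_append, repList_prod, repList_prod]
  -- scalar bookkeeping
  set ca : ℂ := ∏ i, ((a i).factorial : ℂ) with hca
  set cb : ℂ := ∏ i, ((b i).factorial : ℂ) with hcb
  have hca0 : ca ≠ 0 := Finset.prod_ne_zero_iff.2 fun i _ => by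
    exact_mod_cast (a i).factorial_ne_zero
  have hcb0 : cb ≠ 0 := Finset.prod_ne_zero_iff.2 fun i _ => by
    exact_mod_cast (b i).factorial_ne_zero
  have hC0 : (∏ i, (((a i + b i).choose (a i) : ℕ) : ℂ)) ≠ 0 :=
    Finset.prod_ne_zero_iff.2 fun i _ => by
      exact_mod_cast Nat.ne_of_gt (Nat.choose_pos (Nat.le_add_right (a i) (b i)))
  have hchoose : (∏ i, (((a i + b i).choose (a i) : ℕ) : ℂ)) * ca * cb
      = ∏ i, (((a + b) i).factorial : ℂ) := by
    rw [hca, hcb, ← Finset.prod_mul_distrib, ← Finset.prod_mul_distrib]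
    refine Finset.prod_congr rfl fun i _ => ?_
    have h := Nat.choose_mul_factorial_mul_factorial (Nat.le_add_right (a i) (b i))
    rw [Nat.add_sub_cancel_left] at h
    rw [Pi.add_apply]
    exact_mod_cast h
  have hscal : (∏ i, (((a i + b i).choose (a i) : ℕ) : ℂ))
      * (∏ i, (((a + b) i).factorial : ℂ))⁻¹ = (ca * cb)⁻¹ := by
    rw [← hchoose]
    field_simp
  have key : divMon f a * divMon f b -
      (∏ i, (((a i + b i).choose (a i) : ℕ) : ℂ)) • divMon f (a + b)
      = (ca * cb)⁻¹ • (wordProd f wl.get - ordMon f (expOf wl.get)) := by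
    rw [hexp, hword, divMon, divMon, divMon, smul_mul_smul_comm, smul_smul,
      ← hca, ← hcb, ← mul_inv, hscal, smul_sub]
  rw [key]
  refine Submodule.smul_mem _ _ ?_
  have hsub : Submodule.span ℂ {x : UniversalEnvelopingAlgebra ℂ L |
        ∃ n : Fin N → ℕ, r (expOf wl.get) n ∧ x = ordMon f n} ≤
      Submodule.span ℂ {x : UniversalEnvelopingAlgebra ℂ L |
        ∃ n : Fin N → ℕ, r (a + b) n ∧ x = divMon f n} := by
    rw [Submodule.span_le]
    rintro x ⟨n, hn, rfl⟩
    rw [hexp] at hn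
    have : ordMon f n = (∏ i, ((n i).factorial : ℂ)) • divMon f n := by
      rw [divMon, smul_smul, mul_inv_cancel₀, one_smul]
      exact Finset.prod_ne_zero_iff.2 fun i _ => by
        exact_mod_cast (n i).factorial_ne_zero
    rw [this]
    exact Submodule.smul_mem _ _ (Submodule.subset_span ⟨n, hn, rfl⟩)
  exact hsub (hqc wl.length wl.get)

end
end
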